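/- arXiv:2303.11417 — 2 statements merged into one kernel-verified Lean document; each statement's English description precedes it below -/
import Mathlib

section
/- Let C_q be a diagonal n×n real matrix with positive diagonal entries, X a symmetric positive definite n×n real matrix, and let A = C_q X^{−1} + I. Let K(v) be, for each v ∈ ℝ^n, a diagonal matrix with nonpositive diagonal entries whose operator norm satisfies 2‖K(v)‖ ≤ σ_min(A). Suppose π(v) = −K(v)(v − v*) and ∇F(q) = A(v − v*) where v = Xq + v_env. Then for all v, ‖∇F(q)‖² + 2⟨π(v), −∇F(q)⟩ ≥ 0. -/
open Matrix in
/-- Lemma 1 of the paper: with `A = C_q X⁻¹ + I`, `π(v) = −K(v)(v − v*)` and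
`∇F(q) = A(v − v*)` for `v = Xq + v_env`, if each `K(v)` is diagonal with
nonpositive entries and `2σ_max(K(v)) ≤ σ_min(A)`, then
`‖∇F(q)‖² + 2⟨π(v), −∇F(q)⟩ ≥ 0`. -/
theorem stmt_5 {n : ℕ} (d : Fin n → ℝ) (hd : ∀ i, 0 < d i)
    (X : Matrix (Fin n) (Fin n) ℝ) (hX : X.PosDef)
    (venv vstar : Fin n → ℝ)
    (k : (Fin n → ℝ) → Fin n → ℝ) (hk : ∀ v i, k v i ≤ 0)
    (A : Matrix (Fin n) (Fin n) ℝ)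
    (hA : A = Matrix.diagonal d * X⁻¹ + 1)
    -- `2σ_max(K(v)) ≤ σ_min(A)`, stated as `2‖K(v)x‖... ` via operator bound:
    (hKA : ∀ v : Fin n → ℝ, ∀ x : EuclideanSpace ℝ (Fin n),
      2 * ‖Matrix.toEuclideanCLM (𝕜 := ℝ) (Matrix.diagonal (k v))‖ * ‖x‖ ≤
        ‖Matrix.toEuclideanCLM (𝕜 := ℝ) A x‖)
    (π gradF : (Fin n → ℝ) → Fin n → ℝ)
    (hπ : ∀ v, π v = -(Matrix.diagonal (k v)).mulVec (v - vstar))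
    (hgrad : ∀ q, gradF q = A.mulVec (X.mulVec q + venv - vstar)) :
    ∀ q : Fin n → ℝ,
      0 ≤ (∑ i, (gradF q i) ^ 2) +
            2 * (π (X.mulVec q + venv) ⬝ᵥ (-(gradF q))) := by
  intro q
  set v : Fin n → ℝ := X.mulVec q + venv with hv
  set y : Fin n → ℝ := v - vstar with hy
  set Y : EuclideanSpace ℝ (Fin n) := (WithLp.equiv 2 (Fin n → ℝ)).symm y with hY
  set K : Matrix (Fin n) (Fin n) ℝ := Matrix.diagonal (k v) with hK
  set a : EuclideanSpace ℝ (Fin n) := Matrix.toEuclideanCLM (𝕜 := ℝ) A Y with ha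
  set b : EuclideanSpace ℝ (Fin n) := Matrix.toEuclideanCLM (𝕜 := ℝ) K Y with hb
  have hav : ∀ i, a i = A.mulVec y i := fun i => by
    simp [ha, hY, Matrix.toEuclideanCLM_toLp]
  have hbv : ∀ i, b i = K.mulVec y i := fun i => by
    simp [hb, hY, Matrix.toEuclideanCLM_toLp]
  have hgF : gradF q = A.mulVec y := by rw [hgrad]
  -- sum of squares = ‖a‖²
  have h1 : (∑ i, (gradF q i) ^ 2) = ‖a‖ ^ 2 := by
    rw [← real_inner_self_eq_norm_sq]
    rw [PiLp.inner_apply]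
    simp only [RCLike.inner_apply, conj_trivial]
    refine Finset.sum_congr rfl fun i _ => ?_
    rw [hgF, hav i]; ring
  have h2 : π v ⬝ᵥ (-(gradF q)) = inner ℝ b a := by
    rw [PiLp.inner_apply]
    simp only [RCLike.inner_apply, conj_trivial]
    rw [dotProduct]
    refine Finset.sum_congr rfl fun i _ => ?_
    rw [hπ, hgF, hav i, hbv i]
    simp [Matrix.mulVec_neg]
    rw [← hK, ← hy, mul_comm]
  have hba : |inner ℝ b a| ≤ ‖b‖ * ‖a‖ := abs_real_inner_le_norm b a
  have hbn : ‖b‖ ≤ ‖Matrix.toEuclideanCLM (𝕜 := ℝ) K‖ * ‖Y‖ :=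
    (Matrix.toEuclideanCLM (𝕜 := ℝ) K).le_opNorm Y
  have hka := hKA v Y
  have h2b : 2 * ‖b‖ ≤ ‖a‖ := by
    calc 2 * ‖b‖ ≤ 2 * (‖Matrix.toEuclideanCLM (𝕜 := ℝ) K‖ * ‖Y‖) := by linarith
    _ ≤ ‖a‖ := by rw [← ha] at hka; linarith [hka]
  rw [h1, h2]
  have hbnn : (0:ℝ) ≤ ‖b‖ := norm_nonneg _
  have hann : (0:ℝ) ≤ ‖a‖ := norm_nonneg _
  have habs := abs_le.mp hba
  nlinarith [habs.1, habs.2]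
end

section
/- Let f, π ∈ ℝ^n and ω ∈ ℝ^m with ω ≥ 0 componentwise, G an m×n matrix, g ∈ ℝ^m with g ≤ 0 componentwise, and α > 0. Suppose f = −G^⊤ω − ∇F + π for some ∇F ∈ ℝ^n, ω^⊤(G f + α g) = 0, and ‖f‖ ≥ ‖π‖. Then f^⊤∇F ≤ 0. -/
open Matrix in
/-- Lyapunov descent step: from KKT stationarity, complementary slackness,
`ω ≥ 0`, `g ≤ 0`, `α > 0` and `‖f‖ ≥ ‖π‖`, conclude `f ⬝ ∇F ≤ 0`. -/
theorem stmt_6 {n m : ℕ} (f π gradF : Fin n → ℝ) (ω g : Fin m → ℝ)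
    (G : Matrix (Fin m) (Fin n) ℝ) (α : ℝ) (hα : 0 < α)
    (hω : ∀ i, 0 ≤ ω i) (hg : ∀ i, g i ≤ 0)
    (hstat : f = -(Gᵀ.mulVec ω) - gradF + π)
    (hcs : ω ⬝ᵥ (G.mulVec f + α • g) = 0)
    (hnorm : Real.sqrt (∑ i, (π i) ^ 2) ≤ Real.sqrt (∑ i, (f i) ^ 2)) :
    f ⬝ᵥ gradF ≤ 0 := by
  have hgrad : gradF = -(Gᵀ.mulVec ω) - f + π := by
    funext i; have := congrFun hstat i; simp at this ⊢; linarith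
  have hωg : ω ⬝ᵥ g ≤ 0 :=
    Finset.sum_nonpos fun i _ => mul_nonpos_of_nonneg_of_nonpos (hω i) (hg i)
  have hGf : ω ⬝ᵥ G.mulVec f = -(α * (ω ⬝ᵥ g)) := by
    rw [dotProduct_add, dotProduct_smul] at hcs
    simp only [smul_eq_mul] at hcs; linarith
  have htrans : f ⬝ᵥ Gᵀ.mulVec ω = ω ⬝ᵥ G.mulVec f := by
    rw [dotProduct_mulVec, vecMul_transpose, dotProduct_comm, dotProduct_mulVec]
  have hsq : ∑ i, (π i) ^ 2 ≤ ∑ i, (f i) ^ 2 := by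
    have h1 : (0:ℝ) ≤ ∑ i, (π i) ^ 2 := Finset.sum_nonneg fun i _ => sq_nonneg _
    have h2 : (0:ℝ) ≤ ∑ i, (f i) ^ 2 := Finset.sum_nonneg fun i _ => sq_nonneg _
    nlinarith [Real.sq_sqrt h1, Real.sq_sqrt h2, Real.sqrt_nonneg (∑ i, (π i)^2),
      Real.sqrt_nonneg (∑ i, (f i)^2)]
  have hcs2 := Finset.sum_mul_sq_le_sq_mul_sq Finset.univ f π
  have hfπ : f ⬝ᵥ π ≤ ∑ i, (f i) ^ 2 := by
    have h2 : (0:ℝ) ≤ ∑ i, (f i) ^ 2 := Finset.sum_nonneg fun i _ => sq_nonneg _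
    have : (f ⬝ᵥ π) ^ 2 ≤ (∑ i, (f i) ^ 2) ^ 2 := by
      calc (f ⬝ᵥ π)^2 ≤ (∑ i, (f i)^2) * ∑ i, (π i)^2 := hcs2
        _ ≤ _ := by nlinarith
    nlinarith
  have hff : f ⬝ᵥ f = ∑ i, (f i) ^ 2 := by simp [dotProduct, sq]
  have : f ⬝ᵥ gradF = -(f ⬝ᵥ f) + f ⬝ᵥ π + α * (ω ⬝ᵥ g) := by
    rw [hgrad, dotProduct_add, dotProduct_sub, dotProduct_neg, htrans, hGf]; ring
  rw [this, hff]
  nlinarith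
end
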